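/- Let f : ∂D → ℝ be 1-Lipschitz (take Λ₀ = ∂D) with f₋(x) < f₊(x) for every x ∈ D, and let E = {(x,θ) ∈ D × ℝ : f₋(x) < θ < f₊(x)} be the invisible domain of the graph of f. Then the closure of E in D̄ × ℝ meets ∂D × ℝ exactly in the graph of f: closure(E) ∩ (∂D × ℝ) = {(y, f(y)) : y ∈ ∂D}. (The paper's lemma: the invisible domain E(∂S) is contained in AdS and the intersection of its closure with the conformal boundary Ein₂ is exactly ∂S.) -/

import Mathlib

open scoped RealInnerProductSpace

/-- The closed hemisphere `D̄ = {x ∈ S² : ⟪x,e⟫ ≥ 0}`. -/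
def closedHemi (e : EuclideanSpace ℝ (Fin 3)) : Set (EuclideanSpace ℝ (Fin 3)) :=
  {x | ‖x‖ = 1 ∧ 0 ≤ ⟪x, e⟫}

/-- The open hemisphere `D = {x ∈ S² : ⟪x,e⟫ > 0}`. -/
def openHemi (e : EuclideanSpace ℝ (Fin 3)) : Set (EuclideanSpace ℝ (Fin 3)) :=
  {x | ‖x‖ = 1 ∧ 0 < ⟪x, e⟫}

/-- The equatorial circle `∂D = {x ∈ S² : ⟪x,e⟫ = 0}`. -/
def equator (e : EuclideanSpace ℝ (Fin 3)) : Set (EuclideanSpace ℝ (Fin 3)) :=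
  {x | ‖x‖ = 1 ∧ ⟪x, e⟫ = 0}

/-- `f₋(x) = sup_{z ∈ Λ₀} (f z - d(x,z))`. -/
noncomputable def lowerEnv (Λ₀ : Set (EuclideanSpace ℝ (Fin 3)))
    (f : EuclideanSpace ℝ (Fin 3) → ℝ) (x : EuclideanSpace ℝ (Fin 3)) : ℝ :=
  sSup ((fun z => f z - Real.arccos ⟪x, z⟫) '' Λ₀)

/-- `f₊(x) = inf_{z ∈ Λ₀} (f z + d(x,z))`. -/
noncomputable def upperEnv (Λ₀ : Set (EuclideanSpace ℝ (Fin 3)))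
    (f : EuclideanSpace ℝ (Fin 3) → ℝ) (x : EuclideanSpace ℝ (Fin 3)) : ℝ :=
  sInf ((fun z => f z + Real.arccos ⟪x, z⟫) '' Λ₀)

section Aux

variable (e : EuclideanSpace ℝ (Fin 3)) (f : EuclideanSpace ℝ (Fin 3) → ℝ)

lemma hemi_bddAbove
    (hLip : ∀ x ∈ equator e, ∀ y ∈ equator e, |f x - f y| ≤ Real.arccos ⟪x, y⟫)
    {y : EuclideanSpace ℝ (Fin 3)} (hy : y ∈ equator e)
    (x : EuclideanSpace ℝ (Fin 3)) :
    BddAbove ((fun z => f z - Real.arccos ⟪x, z⟫) '' equator e) := by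
  refine ⟨f y + Real.pi, ?_⟩
  rintro _ ⟨z, hz, rfl⟩
  have h1 := hLip z hz y hy
  have h2 := Real.arccos_le_pi (⟪z, y⟫)
  have h3 := Real.arccos_nonneg (⟪x, z⟫)
  have := abs_le.mp h1
  simp only
  linarith [this.2]

lemma hemi_bddBelow
    (hLip : ∀ x ∈ equator e, ∀ y ∈ equator e, |f x - f y| ≤ Real.arccos ⟪x, y⟫)
    {y : EuclideanSpace ℝ (Fin 3)} (hy : y ∈ equator e)
    (x : EuclideanSpace ℝ (Fin 3)) :
    BddBelow ((fun z => f z + Real.arccos ⟪x, z⟫) '' equator e) := by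
  refine ⟨f y - Real.pi, ?_⟩
  rintro _ ⟨z, hz, rfl⟩
  have h1 := hLip z hz y hy
  have h2 := Real.arccos_le_pi (⟪z, y⟫)
  have h3 := Real.arccos_nonneg (⟪x, z⟫)
  have := abs_le.mp h1
  simp only
  linarith [this.1]

lemma lowerEnv_ge
    (hLip : ∀ x ∈ equator e, ∀ y ∈ equator e, |f x - f y| ≤ Real.arccos ⟪x, y⟫)
    {y : EuclideanSpace ℝ (Fin 3)} (hy : y ∈ equator e)
    (x : EuclideanSpace ℝ (Fin 3)) :
    f y - Real.arccos ⟪x, y⟫ ≤ lowerEnv (equator e) f x :=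
  le_csSup (hemi_bddAbove e f hLip hy x) ⟨y, hy, rfl⟩

lemma upperEnv_le
    (hLip : ∀ x ∈ equator e, ∀ y ∈ equator e, |f x - f y| ≤ Real.arccos ⟪x, y⟫)
    {y : EuclideanSpace ℝ (Fin 3)} (hy : y ∈ equator e)
    (x : EuclideanSpace ℝ (Fin 3)) :
    upperEnv (equator e) f x ≤ f y + Real.arccos ⟪x, y⟫ :=
  csInf_le (hemi_bddBelow e f hLip hy x) ⟨y, hy, rfl⟩

end Aux

/-- For a generic `1`-Lipschitz map `f : ∂D → ℝ`, the closure of the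
invisible domain `E = {(x,θ) : x ∈ D, f₋(x) < θ < f₊(x)}` meets the conformal
boundary `∂D × ℝ` exactly in the graph of `f`. -/
theorem closure_invisible_domain_meets_boundary_in_graph
    (e : EuclideanSpace ℝ (Fin 3)) (he : ‖e‖ = 1)
    (f : EuclideanSpace ℝ (Fin 3) → ℝ)
    (hLip : ∀ x ∈ equator e, ∀ y ∈ equator e, |f x - f y| ≤ Real.arccos ⟪x, y⟫)
    (hgen : ∀ x ∈ openHemi e, lowerEnv (equator e) f x < upperEnv (equator e) f x) :
    closure {p : EuclideanSpace ℝ (Fin 3) × ℝ |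
        p.1 ∈ openHemi e ∧ lowerEnv (equator e) f p.1 < p.2 ∧
          p.2 < upperEnv (equator e) f p.1} ∩
      {p : EuclideanSpace ℝ (Fin 3) × ℝ | p.1 ∈ equator e} =
    {p : EuclideanSpace ℝ (Fin 3) × ℝ | p.1 ∈ equator e ∧ p.2 = f p.1} := by
  ext ⟨y, θ⟩
  simp only [Set.mem_inter_iff, Set.mem_setOf_eq]
  constructor
  · rintro ⟨hcl, hy⟩
    refine ⟨hy, ?_⟩
    obtain ⟨u, hu, hlim⟩ := mem_closure_iff_seq_limit.mp hcl
    have hx1 : Filter.Tendsto (fun n => (u n).1) Filter.atTop (nhds y) :=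
      (Continuous.tendsto continuous_fst (y, θ)).comp hlim
    have hx2 : Filter.Tendsto (fun n => (u n).2) Filter.atTop (nhds θ) :=
      (Continuous.tendsto continuous_snd (y, θ)).comp hlim
    -- the distances to y tend to 0
    have hyy : ⟪y, y⟫ = (1 : ℝ) := by
      rw [real_inner_self_eq_norm_mul_norm, hy.1]; ring
    have hcont : Continuous fun z : EuclideanSpace ℝ (Fin 3) => Real.arccos ⟪z, y⟫ :=
      Real.continuous_arccos.comp (Continuous.inner continuous_id continuous_const)
    have hd : Filter.Tendsto (fun n => Real.arccos ⟪(u n).1, y⟫) Filter.atTop (nhds 0) := by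
      have := (hcont.tendsto y).comp hx1
      simpa [hyy, hy.1, Real.arccos_one, Function.comp_def] using this
    have habs : Filter.Tendsto (fun n => |(u n).2 - f y|) Filter.atTop (nhds (|θ - f y|)) :=
      ((continuous_abs.tendsto _).comp ((hx2.sub tendsto_const_nhds)))
    have hle : ∀ n, |(u n).2 - f y| ≤ Real.arccos ⟪(u n).1, y⟫ := by
      intro n
      have h1 := (hu n).2.1
      have h2 := (hu n).2.2
      have h3 := lowerEnv_ge e f hLip hy (u n).1
      have h4 := upperEnv_le e f hLip hy (u n).1
      rw [abs_le]
      constructor <;> linarith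
    have : |θ - f y| ≤ 0 := le_of_tendsto_of_tendsto' habs hd hle
    have h0 : |θ - f y| = 0 := le_antisymm this (abs_nonneg _)
    have := abs_eq_zero.mp h0
    linarith [sub_eq_zero.mp this]
  · rintro ⟨hy, hθ⟩
    refine ⟨?_, hy⟩
    rw [Metric.mem_closure_iff]
    intro ε hε
    set t : ℝ := min ε 1 / 2 with ht_def
    have ht0 : 0 < t := by positivity
    have ht1 : t ≤ 1 / 2 := by
      have : min ε 1 ≤ 1 := min_le_right _ _
      simp only [ht_def]; linarith
    have htε : 2 * t ≤ ε := by
      have : min ε 1 ≤ ε := min_le_left _ _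
      simp only [ht_def]; linarith
    set x : EuclideanSpace ℝ (Fin 3) := Real.cos t • y + Real.sin t • e with hx_def
    have hye : ⟪y, e⟫ = (0 : ℝ) := hy.2
    have hey : ⟪e, y⟫ = (0 : ℝ) := by rw [real_inner_comm]; exact hye
    have hyy : ⟪y, y⟫ = (1 : ℝ) := by
      rw [real_inner_self_eq_norm_mul_norm, hy.1]; ring
    have hee : ⟪e, e⟫ = (1 : ℝ) := by
      rw [real_inner_self_eq_norm_mul_norm, he]; ring
    have hsin_pos : 0 < Real.sin t :=
      Real.sin_pos_of_pos_of_lt_pi ht0 (by linarith [Real.pi_gt_three])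
    have hsin_le : Real.sin t ≤ t := Real.sin_le ht0.le
    have hcos_ge : 1 - t ^ 2 / 2 ≤ Real.cos t := Real.one_sub_sq_div_two_le_cos
    have hcos_le : Real.cos t ≤ 1 := Real.cos_le_one t
    have hxe : ⟪x, e⟫ = Real.sin t := by
      simp only [hx_def, inner_add_left, real_inner_smul_left, hye, hee]; ring
    have hxy : ⟪x, y⟫ = Real.cos t := by
      simp only [hx_def, inner_add_left, real_inner_smul_left, hyy, hey]; ring
    have hxx : ⟪x, x⟫ = (1 : ℝ) := by
      simp only [hx_def, inner_add_left, inner_add_right, real_inner_smul_left,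
        real_inner_smul_right, hyy, hee, hye, hey]
      have := Real.sin_sq_add_cos_sq t
      nlinarith [this]
    have hxnorm : ‖x‖ = 1 := by
      have h1 : ‖x‖ * ‖x‖ = 1 := by rw [← real_inner_self_eq_norm_mul_norm]; exact hxx
      rcases mul_self_eq_one_iff.mp h1 with h | h
      · exact h
      · nlinarith [norm_nonneg x]
    have hxD : x ∈ openHemi e := ⟨hxnorm, by rw [hxe]; exact hsin_pos⟩
    have harccos : Real.arccos ⟪x, y⟫ = t := by
      rw [hxy]; exact Real.arccos_cos ht0.le (by linarith [Real.pi_gt_three])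
    have hlo := lowerEnv_ge e f hLip hy x
    have hhi := upperEnv_le e f hLip hy x
    rw [harccos] at hlo hhi
    have hlohi := hgen x hxD
    set θ' : ℝ := (lowerEnv (equator e) f x + upperEnv (equator e) f x) / 2 with hθ'_def
    have hθ'1 : lowerEnv (equator e) f x < θ' := by simp only [hθ'_def]; linarith
    have hθ'2 : θ' < upperEnv (equator e) f x := by simp only [hθ'_def]; linarith
    refine ⟨(x, θ'), ⟨hxD, hθ'1, hθ'2⟩, ?_⟩
    rw [Prod.dist_eq]
    have hd1 : dist y x < ε := by
      rw [dist_eq_norm]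
      have hdiff : y - x = (1 - Real.cos t) • y + (-Real.sin t) • e := by
        simp only [hx_def]; module
      have hb : ‖y - x‖ ≤ (1 - Real.cos t) + Real.sin t := by
        rw [hdiff]
        refine le_trans (norm_add_le _ _) ?_
        rw [norm_smul, norm_smul, hy.1, he]
        simp only [Real.norm_eq_abs, mul_one]
        rw [abs_of_nonneg (by linarith), abs_neg, abs_of_nonneg hsin_pos.le]
      have ht2 : t ^ 2 ≤ t := by
        have := mul_le_of_le_one_right ht0.le (show t ≤ 1 by linarith)
        calc t ^ 2 = t * t := sq t
          _ ≤ t := this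
      linarith
    have hd2 : dist θ θ' < ε := by
      rw [Real.dist_eq, hθ]
      rw [abs_lt]
      constructor <;> [skip; skip] <;> simp only [hθ'_def] <;> linarith
    exact max_lt hd1 hd2
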